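/- Let α > 1 and define s₁(x) = ln x + (α/(α−1))·x^(α−1) and e₁(x) = x + x^α for x > 0. Then for every fixed Θ > 0 the function θ ↦ E(θ|Θ) := e₁(θ) − e₁(Θ) − Θ·(s₁(θ) − s₁(Θ)) is nonnegative on (0,∞) and vanishes only at θ = Θ. -/

import Mathlib

open Real

lemma bern_key (α : ℝ) (hα : 1 < α) (t : ℝ) (ht : 0 < t) :
    0 ≤ t ^ α - 1 - (α / (α - 1)) * (t ^ (α - 1) - 1) ∧
    (t ^ α - 1 - (α / (α - 1)) * (t ^ (α - 1) - 1) = 0 ↔ t = 1) := by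
  have hα1 : (0:ℝ) < α - 1 := by linarith
  have hp : 1 < α / (α - 1) := (one_lt_div hα1).mpr (by linarith)
  have hs : -1 ≤ t ^ (α - 1) - 1 := by
    have := Real.rpow_nonneg ht.le (α - 1); linarith
  have hpow : (1 + (t ^ (α - 1) - 1)) ^ (α / (α - 1)) = t ^ α := by
    have h1 : (1 + (t ^ (α - 1) - 1)) = t ^ (α - 1) := by ring
    rw [h1, ← Real.rpow_mul ht.le]
    congr 1
    field_simp
  have hber := one_add_mul_self_le_rpow_one_add hs hp.le
  rw [hpow] at hber
  refine ⟨by linarith, ?_, ?_⟩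
  · intro h
    by_contra hne
    have hsne : t ^ (α - 1) - 1 ≠ 0 := by
      intro h0
      have h1 : t ^ (α - 1) = 1 := by linarith
      rcases lt_trichotomy t 1 with h' | h' | h'
      · have := Real.rpow_lt_one ht.le h' hα1; linarith
      · exact hne h'
      · have := Real.one_lt_rpow_iff_of_pos ht |>.mpr (Or.inl ⟨h', hα1⟩); linarith
    have hst := one_add_mul_self_lt_rpow_one_add hs hsne hp
    rw [hpow] at hst
    linarith
  · intro h; subst h; simp

theorem relative_entropy_nonlin_nonneg (α : ℝ) (hα : 1 < α) (Θ : ℝ) (hΘ : 0 < Θ) :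
    ∀ θ : ℝ, 0 < θ →
      (0 ≤ (θ + θ ^ α) - (Θ + Θ ^ α)
            - Θ * ((Real.log θ + (α / (α - 1)) * θ ^ (α - 1))
                  - (Real.log Θ + (α / (α - 1)) * Θ ^ (α - 1)))) ∧
      ((θ + θ ^ α) - (Θ + Θ ^ α)
            - Θ * ((Real.log θ + (α / (α - 1)) * θ ^ (α - 1))
                  - (Real.log Θ + (α / (α - 1)) * Θ ^ (α - 1))) = 0 ↔ θ = Θ) := by
  intro θ hθ
  set t := θ / Θ with htdef
  have ht : 0 < t := div_pos hθ hΘ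
  have hα1 : (0:ℝ) < α - 1 := by linarith
  have hΘα : 0 < Θ ^ α := Real.rpow_pos_of_pos hΘ α
  have hlog : Real.log θ - Real.log Θ = Real.log t := (Real.log_div hθ.ne' hΘ.ne').symm
  have hrα : θ ^ α = Θ ^ α * t ^ α := by
    rw [htdef, Real.div_rpow hθ.le hΘ.le]
    field_simp
  have hrα1 : θ ^ (α - 1) = Θ ^ (α - 1) * t ^ (α - 1) := by
    rw [htdef, Real.div_rpow hθ.le hΘ.le]
    have : Θ ^ (α - 1) ≠ 0 := (Real.rpow_pos_of_pos hΘ _).ne'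
    field_simp
  have hΘΘ : Θ * Θ ^ (α - 1) = Θ ^ α := by
    nth_rewrite 1 [← Real.rpow_one Θ]
    rw [← Real.rpow_add hΘ]; ring_nf
  have hθeq : θ = Θ * t := by rw [htdef]; field_simp [hΘ.ne']
  -- rewrite E as sum of two nonneg pieces
  have hE : (θ + θ ^ α) - (Θ + Θ ^ α)
            - Θ * ((Real.log θ + (α / (α - 1)) * θ ^ (α - 1))
                  - (Real.log Θ + (α / (α - 1)) * Θ ^ (α - 1)))
      = Θ * (t - 1 - Real.log t)
        + Θ ^ α * (t ^ α - 1 - (α / (α - 1)) * (t ^ (α - 1) - 1)) := by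
    have h1 : Θ * ((Real.log θ + (α / (α - 1)) * θ ^ (α - 1))
                  - (Real.log Θ + (α / (α - 1)) * Θ ^ (α - 1)))
        = Θ * Real.log t + (α / (α - 1)) * Θ ^ α * (t ^ (α - 1) - 1) := by
      rw [hrα1]
      have : Θ * (α / (α - 1) * (Θ ^ (α - 1) * t ^ (α - 1)) - α / (α - 1) * Θ ^ (α - 1))
          = (α / (α - 1)) * (Θ * Θ ^ (α - 1)) * (t ^ (α - 1) - 1) := by ring
      calc Θ * (Real.log θ + α / (α - 1) * (Θ ^ (α - 1) * t ^ (α - 1))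
              - (Real.log Θ + α / (α - 1) * Θ ^ (α - 1)))
          = Θ * (Real.log θ - Real.log Θ)
            + (α / (α - 1)) * (Θ * Θ ^ (α - 1)) * (t ^ (α - 1) - 1) := by ring
        _ = _ := by rw [hlog, hΘΘ]
    rw [h1, hrα]
    nth_rewrite 1 [hθeq]
    ring
  rw [hE]
  have hA : 0 ≤ t - 1 - Real.log t := by
    have := Real.log_le_sub_one_of_pos ht; linarith
  obtain ⟨hB, hBiff⟩ := bern_key α hα t ht
  have htΘ : t = 1 ↔ θ = Θ := by
    rw [htdef, div_eq_one_iff_eq hΘ.ne']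
  constructor
  · positivity
  constructor
  · intro h
    have h1 : Θ * (t - 1 - Real.log t) = 0 ∧
        Θ ^ α * (t ^ α - 1 - (α / (α - 1)) * (t ^ (α - 1) - 1)) = 0 := by
      constructor <;> nlinarith [mul_nonneg hΘ.le hA, mul_nonneg hΘα.le hB]
    have ht1 : t = 1 := by
      by_contra hne
      have := Real.log_lt_sub_one_of_pos ht hne
      nlinarith [h1.1]
    exact htΘ.mp ht1
  · intro h
    have ht1 : t = 1 := htΘ.mpr h
    rw [ht1]
    simp
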